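/- For integers n ≥ 1 and 1 ≤ k ≤ n: -∑_{j=k}^n (n - 2j) · C(n,j)² = k · C(n,k) · C(n-1,k-1), where C denotes the binomial coefficient. -/

import Mathlib

lemma tele (f : ℕ → ℤ) (k : ℕ) : ∀ n, k ≤ n →
    ∑ j ∈ Finset.Icc k n, (f j - f (j + 1)) = f k - f (n + 1) := by
  intro n hn
  induction n, hn using Nat.le_induction with
  | base => simp
  | succ n hn ih =>
    rw [Finset.sum_Icc_succ_top (by omega), ih]
    ring

/-- `-∑_{j=k}^n (n - 2j) C(n,j)² = k C(n,k) C(n-1,k-1)`. -/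
theorem stmt5 (n k : ℕ) (hk : 1 ≤ k) (hkn : k ≤ n) :
    -∑ j ∈ Finset.Icc k n, ((n : ℤ) - 2 * j) * (n.choose j : ℤ) ^ 2
      = k * (n.choose k : ℤ) * ((n - 1).choose (k - 1) : ℤ) := by
  obtain ⟨m, rfl⟩ : ∃ m, n = m + 1 := ⟨n - 1, by omega⟩
  set f : ℕ → ℤ := fun j => (j : ℤ) * ((m + 1).choose j : ℤ) * (m.choose (j - 1) : ℤ)
    with hf
  have key : ∀ j ∈ Finset.Icc k (m + 1),
      (((m + 1 : ℕ) : ℤ) - 2 * j) * (((m + 1).choose j : ℤ)) ^ 2 = f (j + 1) - f j := by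
    intro j hj
    simp only [Finset.mem_Icc] at hj
    obtain ⟨i, rfl⟩ : ∃ i, j = i + 1 := ⟨j - 1, by omega⟩
    have e1 : (((m + 1).choose (i + 1) : ℤ)) = (m.choose i : ℤ) + (m.choose (i + 1) : ℤ) := by
      rw [Nat.choose_succ_succ]; push_cast; ring
    have e2 : ((m : ℤ) + 1) * (m.choose i : ℤ) = ((m + 1).choose (i + 1) : ℤ) * ((i : ℤ) + 1) := by
      exact_mod_cast congrArg (Nat.cast (R := ℤ)) (Nat.add_one_mul_choose_eq m i)
    have e3 : ((m : ℤ) + 1) * (m.choose (i + 1) : ℤ) = ((m + 1).choose (i + 2) : ℤ) * ((i : ℤ) + 2) := by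
      exact_mod_cast congrArg (Nat.cast (R := ℤ)) (Nat.add_one_mul_choose_eq m (i + 1))
    simp only [hf]
    push_cast
    set a := (m.choose (i + 1) : ℤ)
    set b := (m.choose i : ℤ)
    set c := ((m + 1).choose (i + 1) : ℤ)
    set d := ((m + 1).choose (i + 2) : ℤ)
    linear_combination a * e3 + (2 * c - b) * e2 + ((m + 1 : ℤ) * (a + c - b)) * e1
  have hsum : ∑ j ∈ Finset.Icc k (m + 1), (((m + 1 : ℕ) : ℤ) - 2 * j) * (((m + 1).choose j : ℤ)) ^ 2
      = f (m + 2) - f k := by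
    rw [Finset.sum_congr rfl key]
    have := tele (fun j => -f j) k (m + 1) hkn
    try simp only at this
    have h2 : ∑ j ∈ Finset.Icc k (m + 1), (f (j + 1) - f j)
        = ∑ j ∈ Finset.Icc k (m + 1), ((fun j => -f j) j - (fun j => -f j) (j + 1)) := by
      apply Finset.sum_congr rfl; intro x _; ring
    rw [h2, this]; ring
  have hzero : f (m + 2) = 0 := by
    simp [hf, Nat.choose_succ_self]
  push_cast at hsum ⊢
  rw [hsum, hzero]
  simp only [hf]
  push_cast
  ring
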